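/- Let σ, σ0, τ0 > 0, z ≥ 0, N a positive integer, and define R(β) as in the shrinkage reward functional: R(β) = E_{τ ~ N(τ0, σ0²)}[τ · Φ((Nτ + τ0 β)/(2√N σ) − z)]. Let β* = 4σ²/σ0² + 2√N z σ/τ0. Then R′(β) > 0 for 0 ≤ β < β* and R′(β) < 0 for β > β*. -/

import Mathlib

open Real MeasureTheory

noncomputable def Phi (x : ℝ) : ℝ :=
  ∫ t in Set.Iic x, (Real.sqrt (2 * Real.pi))⁻¹ * Real.exp (-t ^ 2 / 2)

lemma gauss_exp_eq (t : ℝ) : Real.exp (-t ^ 2 / 2) = Real.exp (-(1/2 : ℝ) * t ^ 2) := by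
  ring_nf

lemma integrable_pdf : Integrable (fun t : ℝ => (Real.sqrt (2 * Real.pi))⁻¹ * Real.exp (-t ^ 2 / 2)) := by
  simp_rw [gauss_exp_eq]
  exact (integrable_exp_neg_mul_sq (by norm_num)).const_mul _

lemma continuous_pdf : Continuous (fun t : ℝ => (Real.sqrt (2 * Real.pi))⁻¹ * Real.exp (-t ^ 2 / 2)) := by
  fun_prop

lemma hasDerivAt_Phi (x : ℝ) :
    HasDerivAt Phi ((Real.sqrt (2 * Real.pi))⁻¹ * Real.exp (-x ^ 2 / 2)) x := by
  set f : ℝ → ℝ := fun t => (Real.sqrt (2 * Real.pi))⁻¹ * Real.exp (-t ^ 2 / 2) with hf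
  have hint := integrable_pdf
  have key : ∀ y : ℝ, Phi y = Phi 0 + ∫ t in (0:ℝ)..y, f t := by
    intro y
    rw [← intervalIntegral.integral_Iic_sub_Iic hint.integrableOn hint.integrableOn]
    unfold Phi
    ring
  have h2 : HasDerivAt (fun y => Phi 0 + ∫ t in (0:ℝ)..y, f t) (f x) x := by
    refine (intervalIntegral.integral_hasDerivAt_right hint.intervalIntegrable
      continuous_pdf.aestronglyMeasurable.stronglyMeasurableAtFilter
      continuous_pdf.continuousAt).const_add _
  exact h2.congr_of_eventuallyEq (Filter.Eventually.of_forall fun y => key y)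

lemma continuous_Phi : Continuous Phi :=
  continuous_iff_continuousAt.2 fun x => (hasDerivAt_Phi x).continuousAt

lemma Phi_nonneg (x : ℝ) : 0 ≤ Phi x :=
  integral_nonneg fun t => by positivity

lemma Phi_le_one (x : ℝ) : Phi x ≤ 1 := by
  have h1 : Phi x ≤ ∫ t : ℝ, (Real.sqrt (2 * Real.pi))⁻¹ * Real.exp (-t ^ 2 / 2) :=
    setIntegral_le_integral integrable_pdf (Filter.Eventually.of_forall fun t => by positivity)
  have h2 : ∫ t : ℝ, (Real.sqrt (2 * Real.pi))⁻¹ * Real.exp (-t ^ 2 / 2) = 1 := by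
    simp_rw [gauss_exp_eq]
    rw [MeasureTheory.integral_const_mul, integral_gaussian]
    have : Real.pi / (1/2) = 2 * Real.pi := by ring
    rw [this, inv_mul_cancel₀ (Real.sqrt_ne_zero'.mpr (by positivity))]
  linarith [h1, h2.le]

lemma integrable_abs_gauss {b : ℝ} (hb : 0 < b) (m : ℝ) :
    Integrable (fun τ : ℝ => |τ| * Real.exp (-b * (τ - m) ^ 2)) := by
  have h1 : Integrable (fun x : ℝ => |x + m| * Real.exp (-b * x ^ 2)) := by
    apply Integrable.mono'
      (((integrable_mul_exp_neg_mul_sq hb).abs).add ((integrable_exp_neg_mul_sq hb).const_mul |m|))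
    · exact ((continuous_abs.comp (continuous_id.add continuous_const)).mul
        (Real.continuous_exp.comp (by fun_prop))).aestronglyMeasurable
    · refine Filter.Eventually.of_forall fun x => ?_
      have hx : |x + m| ≤ |x| + |m| := abs_add_le x m
      have he : 0 ≤ Real.exp (-b * x ^ 2) := (Real.exp_pos _).le
      rw [Real.norm_eq_abs, abs_mul, abs_abs, abs_of_nonneg he]
      calc |x + m| * Real.exp (-b * x ^ 2) ≤ (|x| + |m|) * Real.exp (-b * x ^ 2) := by
            exact mul_le_mul_of_nonneg_right hx he
        _ = |x * Real.exp (-b * x ^ 2)| + |m| * Real.exp (-b * x ^ 2) := by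
            rw [abs_mul, abs_of_nonneg he]; ring
  have h2 := h1.comp_sub_right m
  simpa using h2

lemma integrable_mul_gauss {b : ℝ} (hb : 0 < b) (m : ℝ) :
    Integrable (fun τ : ℝ => τ * Real.exp (-b * (τ - m) ^ 2)) := by
  apply Integrable.mono' (integrable_abs_gauss hb m)
  · exact (continuous_id.mul (Real.continuous_exp.comp (by fun_prop))).aestronglyMeasurable
  · refine Filter.Eventually.of_forall fun x => ?_
    rw [Real.norm_eq_abs, abs_mul, abs_of_nonneg (Real.exp_pos _).le]

lemma gauss_moment {b : ℝ} (hb : 0 < b) (m : ℝ) :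
    ∫ τ : ℝ, τ * Real.exp (-b * (τ - m) ^ 2) = m * Real.sqrt (Real.pi / b) := by
  have h1 : ∫ τ : ℝ, τ * Real.exp (-b * (τ - m) ^ 2)
      = ∫ x : ℝ, (x + m) * Real.exp (-b * x ^ 2) := by
    rw [← MeasureTheory.integral_add_right_eq_self
      (fun τ : ℝ => τ * Real.exp (-b * (τ - m) ^ 2)) m]
    simp
  have hodd : ∫ x : ℝ, x * Real.exp (-b * x ^ 2) = 0 := by
    have h := MeasureTheory.integral_neg_eq_self (fun x : ℝ => x * Real.exp (-b * x ^ 2)) volume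
    simp only [neg_mul, neg_sq] at h
    have h2 : ∫ x : ℝ, -(x * Real.exp (-b * x ^ 2)) = ∫ x : ℝ, x * Real.exp (-b * x ^ 2) := by
      simpa [neg_mul, mul_comm] using h
    rw [integral_neg] at h2
    linarith
  rw [h1]
  have : ∀ x : ℝ, (x + m) * Real.exp (-b * x ^ 2)
      = x * Real.exp (-b * x ^ 2) + m * Real.exp (-b * x ^ 2) := fun x => by ring
  simp_rw [this]
  rw [integral_add (by simpa using integrable_mul_gauss hb 0)
    ((integrable_exp_neg_mul_sq hb).const_mul m), hodd,
    MeasureTheory.integral_const_mul, integral_gaussian]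
  ring

theorem stmt_2 (σ σ0 τ0 z : ℝ) (hσ : 0 < σ) (hσ0 : 0 < σ0) (hτ0 : 0 < τ0)
    (hz : 0 ≤ z) (N : ℕ) (hN : 0 < N)
    (R : ℝ → ℝ)
    (hR : R = fun β => ∫ τ : ℝ,
      (1 / (Real.sqrt (2 * Real.pi) * σ0)) * Real.exp (-(τ - τ0) ^ 2 / (2 * σ0 ^ 2)) *
        (τ * Phi ((N * τ + τ0 * β) / (2 * Real.sqrt N * σ) - z)))
    (βstar : ℝ) (hβstar : βstar = 4 * σ ^ 2 / σ0 ^ 2 + 2 * Real.sqrt N * z * σ / τ0) :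
    (∀ β : ℝ, 0 ≤ β → β < βstar → 0 < deriv R β) ∧
      (∀ β : ℝ, βstar < β → deriv R β < 0) := by
  have hπ : 0 < Real.sqrt (2 * Real.pi) := Real.sqrt_pos.2 (by positivity)
  set sN : ℝ := Real.sqrt N with hsN_def
  have hsN : 0 < sN := Real.sqrt_pos.2 (by exact_mod_cast hN)
  have hsN2 : sN * sN = (N : ℝ) := Real.mul_self_sqrt (Nat.cast_nonneg N)
  set cg : ℝ := 1 / (Real.sqrt (2 * Real.pi) * σ0) with hcg_def
  have hcg : 0 < cg := by positivity
  set bg : ℝ := 1 / (2 * σ0 ^ 2) with hbg_def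
  have hbg : 0 < bg := by positivity
  set a : ℝ := (N : ℝ) / (2 * sN * σ) with ha_def
  set k : ℝ := τ0 / (2 * sN * σ) with hk_def
  have hk : 0 < k := by positivity
  set F : ℝ → ℝ → ℝ := fun β τ =>
    cg * Real.exp (-bg * (τ - τ0) ^ 2) * (τ * Phi (a * τ + (k * β - z))) with hF_def
  set F' : ℝ → ℝ → ℝ := fun β τ =>
    cg * Real.exp (-bg * (τ - τ0) ^ 2) *
      (τ * ((Real.sqrt (2 * Real.pi))⁻¹ * Real.exp (-(a * τ + (k * β - z)) ^ 2 / 2) * k))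
    with hF'_def
  have hRF : R = fun β => ∫ τ : ℝ, F β τ := by
    rw [hR]
    funext β
    congr 1
    funext τ
    have e1 : -(τ - τ0) ^ 2 / (2 * σ0 ^ 2) = -bg * (τ - τ0) ^ 2 := by
      rw [hbg_def]; ring
    have e2 : ((N : ℝ) * τ + τ0 * β) / (2 * Real.sqrt N * σ) - z = a * τ + (k * β - z) := by
      rw [ha_def, hk_def]; field_simp; ring
    rw [e1, e2, hcg_def]
  -- a uniform integrable bound
  have hbound_int : Integrable (fun τ : ℝ =>
      (cg * ((Real.sqrt (2 * Real.pi))⁻¹ * k)) * (|τ| * Real.exp (-bg * (τ - τ0) ^ 2))) :=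
    (integrable_abs_gauss hbg τ0).const_mul _
  have hF_cont : ∀ β : ℝ, Continuous (F β) := by
    intro β
    apply Continuous.mul
    · fun_prop
    · exact continuous_id.mul (continuous_Phi.comp (by fun_prop))
  have hF'_cont : ∀ β : ℝ, Continuous (F' β) := by
    intro β; fun_prop
  have hF_int : ∀ β : ℝ, Integrable (F β) := by
    intro β
    apply Integrable.mono' ((integrable_abs_gauss hbg τ0).const_mul cg)
      (hF_cont β).aestronglyMeasurable
    refine Filter.Eventually.of_forall fun τ => ?_
    have h1 : 0 ≤ Real.exp (-bg * (τ - τ0) ^ 2) := (Real.exp_pos _).le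
    have h2 : |Phi (a * τ + (k * β - z))| ≤ 1 := by
      rw [abs_of_nonneg (Phi_nonneg _)]; exact Phi_le_one _
    rw [Real.norm_eq_abs, hF_def]
    simp only []
    rw [abs_mul, abs_mul, abs_of_pos hcg, abs_of_nonneg h1, abs_mul]
    calc cg * Real.exp (-bg * (τ - τ0) ^ 2) * (|τ| * |Phi (a * τ + (k * β - z))|)
        ≤ cg * Real.exp (-bg * (τ - τ0) ^ 2) * (|τ| * 1) := by
          apply mul_le_mul_of_nonneg_left (mul_le_mul_of_nonneg_left h2 (abs_nonneg τ))
          positivity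
      _ = cg * (|τ| * Real.exp (-bg * (τ - τ0) ^ 2)) := by ring
  -- derivative of R
  have hderiv : ∀ β : ℝ, HasDerivAt R (∫ τ : ℝ, F' β τ) β := by
    intro β
    rw [hRF]
    have key := hasDerivAt_integral_of_dominated_loc_of_deriv_le (μ := volume)
      (F := F) (F' := F') (x₀ := β)
      (bound := fun τ => (cg * ((Real.sqrt (2 * Real.pi))⁻¹ * k)) *
        (|τ| * Real.exp (-bg * (τ - τ0) ^ 2)))
      (s := Metric.ball β 1) (Metric.ball_mem_nhds β one_pos)
      (Filter.Eventually.of_forall fun x => (hF_cont x).aestronglyMeasurable)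
      (hF_int β) ((hF'_cont β).aestronglyMeasurable) ?_ hbound_int ?_
    · exact key.2
    · refine Filter.Eventually.of_forall fun τ => fun x _ => ?_
      rw [Real.norm_eq_abs, hF'_def]
      simp only []
      have h1 : 0 ≤ Real.exp (-bg * (τ - τ0) ^ 2) := (Real.exp_pos _).le
      have h2 : Real.exp (-(a * τ + (k * x - z)) ^ 2 / 2) ≤ 1 := by
        rw [← Real.exp_zero]
        apply Real.exp_le_exp.2
        nlinarith [sq_nonneg (a * τ + (k * x - z))]
      rw [abs_mul, abs_mul, abs_of_pos hcg, abs_of_nonneg h1, abs_mul,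
        abs_of_nonneg (by positivity : (0:ℝ) ≤ (Real.sqrt (2 * Real.pi))⁻¹ *
          Real.exp (-(a * τ + (k * x - z)) ^ 2 / 2) * k)]
      calc cg * Real.exp (-bg * (τ - τ0) ^ 2) *
            (|τ| * ((Real.sqrt (2 * Real.pi))⁻¹ * Real.exp (-(a * τ + (k * x - z)) ^ 2 / 2) * k))
          ≤ cg * Real.exp (-bg * (τ - τ0) ^ 2) *
            (|τ| * ((Real.sqrt (2 * Real.pi))⁻¹ * 1 * k)) := by
            apply mul_le_mul_of_nonneg_left _ (by positivity)
            apply mul_le_mul_of_nonneg_left _ (abs_nonneg τ)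
            apply mul_le_mul_of_nonneg_right _ hk.le
            apply mul_le_mul_of_nonneg_left h2 (by positivity)
        _ = (cg * ((Real.sqrt (2 * Real.pi))⁻¹ * k)) *
            (|τ| * Real.exp (-bg * (τ - τ0) ^ 2)) := by ring
    · refine Filter.Eventually.of_forall fun τ => fun x _ => ?_
      have hu : HasDerivAt (fun y : ℝ => a * τ + (k * y - z)) k x := by
        have h := ((hasDerivAt_id x).const_mul k).add_const (a * τ - z)
        simp only [mul_one, id_eq] at h
        exact h.congr_of_eventuallyEq (Filter.Eventually.of_forall fun y => by ring)
      have hPhiu := (hasDerivAt_Phi (a * τ + (k * x - z))).comp x hu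
      have hC := hPhiu.const_mul (cg * Real.exp (-bg * (τ - τ0) ^ 2) * τ)
      have heq : (fun y : ℝ => cg * Real.exp (-bg * (τ - τ0) ^ 2) * τ *
          (Phi ∘ fun y : ℝ => a * τ + (k * y - z)) y) = fun y => F y τ := by
        funext y
        simp only [hF_def, Function.comp]
        ring
      rw [heq] at hC
      convert hC using 1
      · rfl
      simp only [hF'_def]
      ring
  -- compute the integral of F'
  have hval : ∀ β : ℝ, ∃ K : ℝ, 0 < K ∧
      (∫ τ : ℝ, F' β τ) = K * (τ0 / (4 * σ ^ 2)) * (βstar - β) := by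
    intro β
    set c : ℝ := k * β - z with hc_def
    set b2 : ℝ := bg + a ^ 2 / 2 with hb2_def
    have hb2 : 0 < b2 := by positivity
    set B : ℝ := 2 * bg * τ0 - a * c with hB_def
    set m : ℝ := B / (2 * b2) with hm_def
    set D : ℝ := b2 * m ^ 2 - bg * τ0 ^ 2 - c ^ 2 / 2 with hD_def
    set K0 : ℝ := cg * (Real.sqrt (2 * Real.pi))⁻¹ * k * Real.exp D with hK0_def
    have hK0 : 0 < K0 := by positivity
    have hptwise : ∀ τ : ℝ, F' β τ = K0 * (τ * Real.exp (-b2 * (τ - m) ^ 2)) := by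
      intro τ
      simp only [hF'_def]
      rw [hK0_def]
      rw [show cg * Real.exp (-bg * (τ - τ0) ^ 2) *
          (τ * ((Real.sqrt (2 * Real.pi))⁻¹ * Real.exp (-(a * τ + (k * β - z)) ^ 2 / 2) * k))
          = cg * (Real.sqrt (2 * Real.pi))⁻¹ * k * τ *
            (Real.exp (-bg * (τ - τ0) ^ 2) * Real.exp (-(a * τ + c) ^ 2 / 2)) by
        rw [hc_def]; ring]
      rw [← Real.exp_add]
      rw [show -bg * (τ - τ0) ^ 2 + -(a * τ + c) ^ 2 / 2 = D + -b2 * (τ - m) ^ 2 by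
        rw [hD_def, hm_def, hB_def, hb2_def]
        field_simp
        ring]
      rw [Real.exp_add]
      ring
    have hint : (∫ τ : ℝ, F' β τ) = K0 * (m * Real.sqrt (Real.pi / b2)) := by
      rw [show (fun τ : ℝ => F' β τ) = fun τ => K0 * (τ * Real.exp (-b2 * (τ - m) ^ 2)) from
        funext hptwise]
      rw [MeasureTheory.integral_const_mul, gauss_moment hb2 m]
    have ha2 : a = sN / (2 * σ) := by
      rw [ha_def, ← hsN2]
      field_simp
    have hBeq : B = (τ0 / (4 * σ ^ 2)) * (βstar - β) := by
      rw [hB_def, hc_def, hβstar, hbg_def, ha2, hk_def]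
      have hsN' : sN ≠ 0 := ne_of_gt hsN
      field_simp
      ring
    refine ⟨K0 * Real.sqrt (Real.pi / b2) / (2 * b2), by positivity, ?_⟩
    rw [hint, hm_def, hBeq]
    ring
  constructor
  · intro β _ hβlt
    obtain ⟨K, hK, hEq⟩ := hval β
    rw [(hderiv β).deriv, hEq]
    have : 0 < βstar - β := by linarith
    positivity
  · intro β hβgt
    obtain ⟨K, hK, hEq⟩ := hval β
    rw [(hderiv β).deriv, hEq]
    have h1 : βstar - β < 0 := by linarith
    have h2 : 0 < K * (τ0 / (4 * σ ^ 2)) := by positivity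
    nlinarith
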